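/- Let 2 < k < j be integers and let K_N have a red-blue edge coloring with no red copy of C_{2k+1} and no blue copy of W_{2j}. Let w be a vertex of K_N and let H be the set of blue neighbors of w, with |H| ≥ 3j. Then the blue graph H^B induced on H is not bipartite. -/

import Mathlib

/-- `G` contains a cycle of length `n` (a copy of `C_n`). -/
def HasNCycle {V : Type*} (G : SimpleGraph V) (n : ℕ) : Prop :=
  ∃ (v : V) (c : G.Walk v v), c.IsCycle ∧ c.length = n

/-- `G` contains a copy of the wheel `W_n = C_n ∗ K_1`: a cycle of length `n`
together with a hub adjacent to all of its vertices. -/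
def HasNWheel {V : Type*} (G : SimpleGraph V) (n : ℕ) : Prop :=
  ∃ (w v : V) (c : G.Walk v v), c.IsCycle ∧ c.length = n ∧ ∀ x ∈ c.support, G.Adj w x

/-- `G` is bipartite: the vertices split into two parts with all edges across. -/
def IsBipartite {V : Type*} (G : SimpleGraph V) : Prop :=
  ∃ A : Set V, ∀ u v, G.Adj u v → (u ∈ A ↔ v ∉ A)

variable {V : Type*} {G : SimpleGraph V}

/-- Walk along a list given chain adjacency. -/
def walkOfChain (G : SimpleGraph V) : ∀ (a : V) (l : List V) (b : V),
    List.Chain G.Adj a (l ++ [b]) → G.Walk a b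
  | _, [], _, h => SimpleGraph.Walk.cons (List.isChain_pair.mp h) SimpleGraph.Walk.nil
  | a, c :: l, b, h =>
      SimpleGraph.Walk.cons (List.chain_cons.mp h).1 (walkOfChain G c l b (List.chain_cons.mp h).2)

lemma walkOfChain_support (G : SimpleGraph V) (a : V) (l : List V) (b : V)
    (h : List.Chain G.Adj a (l ++ [b])) :
    (walkOfChain G a l b h).support = a :: (l ++ [b]) := by
  induction l generalizing a with
  | nil => simp [walkOfChain]
  | cons c l ih => simp [walkOfChain, ih _ (List.chain_cons.mp h).2]

lemma walkOfChain_length (G : SimpleGraph V) (a : V) (l : List V) (b : V)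
    (h : List.Chain G.Adj a (l ++ [b])) :
    (walkOfChain G a l b h).length = l.length + 1 := by
  induction l generalizing a with
  | nil => simp [walkOfChain]
  | cons c l ih => simp [walkOfChain, ih _ (List.chain_cons.mp h).2]

lemma edge_last_of_mem_edges {u v : V} (p : G.Walk u v) (hnd : p.support.Nodup)
    (he : s(v, u) ∈ p.edges) : p.length = 1 := by
  induction p with
  | nil => simp at he
  | @cons x y z h q ih =>
    simp only [SimpleGraph.Walk.edges_cons, List.mem_cons] at he
    simp only [SimpleGraph.Walk.support_cons, List.nodup_cons] at hnd
    rcases he with he | he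
    · have hzy : z = y := by
        rcases Sym2.eq_iff.mp he with ⟨h1, h2⟩ | ⟨h1, h2⟩
        · exact h1.trans h2
        · exact h1
      subst hzy
      cases q with
      | nil => simp
      | @cons _ m _ h' q' =>
        exfalso
        have : z ∈ q'.support := SimpleGraph.Walk.end_mem_support q'
        simp only [SimpleGraph.Walk.support_cons, List.nodup_cons] at hnd
        exact hnd.2.1 this
    · exact absurd (SimpleGraph.Walk.snd_mem_support_of_mem_edges q he) hnd.1

/-- Build a cycle from a vertex list `a :: b :: l' ++ [g]` with chain adjacency
and closing adjacency `g ~ a`. -/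
lemma exists_cycle_of_list (G : SimpleGraph V) (a b g : V) (l' : List V)
    (hnd : (a :: b :: (l' ++ [g])).Nodup)
    (hchain : List.Chain G.Adj a (b :: (l' ++ [g])))
    (hclose : G.Adj g a) :
    ∃ c : G.Walk a a, c.IsCycle ∧ c.length = l'.length + 3 ∧
      c.support = a :: b :: ((l' ++ [g]) ++ [a]) := by
  replace hchain := List.chain_cons.mp hchain
  have hab : G.Adj a b := hchain.1
  have hch2 : List.Chain G.Adj b ((l' ++ [g]) ++ [a]) := by
    have h2 : List.Chain' G.Adj ((b :: (l' ++ [g])) ++ [a]) := by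
      refine List.IsChain.append hchain.2 (by simp) ?_
      intro x hx y hy
      simp only [List.head?_cons, Option.mem_def, Option.some.injEq] at hy
      subst hy
      have hg : (b :: (l' ++ [g])).getLast? = some g := by
        rw [← List.cons_append, List.getLast?_concat]
      rw [hg] at hx
      simp only [Option.mem_def, Option.some.injEq] at hx
      subst hx
      exact hclose
    rw [List.cons_append] at h2
    exact h2
  let p := walkOfChain G b (l' ++ [g]) a hch2
  have hsupp : p.support = b :: ((l' ++ [g]) ++ [a]) := walkOfChain_support ..
  have hlen : p.length = l'.length + 2 := by simp [p, walkOfChain_length]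
  have hperm : (b :: ((l' ++ [g]) ++ [a])).Perm (a :: b :: (l' ++ [g])) :=
    ((List.perm_append_singleton a _).cons b).trans (List.Perm.swap a b _)
  have hpath : p.IsPath := by
    rw [SimpleGraph.Walk.isPath_def, hsupp]
    exact hperm.nodup_iff.mpr hnd
  refine ⟨SimpleGraph.Walk.cons hab p, ?_, by simp [hlen], by
    simp [SimpleGraph.Walk.support_cons, hsupp]⟩
  rw [SimpleGraph.Walk.cons_isCycle_iff]
  refine ⟨hpath, fun he => ?_⟩
  have := edge_last_of_mem_edges p (SimpleGraph.Walk.isPath_def _ |>.mp hpath) he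
  omega

/-- upgraded version also giving support containment -/
lemma exists_cycle_of_list'' (G : SimpleGraph V) (L : List V) (h3 : 3 ≤ L.length)
    (hnd : L.Nodup) (hchain : L.Chain' G.Adj) (hne : L ≠ [])
    (hclose : G.Adj (L.getLast hne) (L.head hne)) :
    ∃ (v : V) (c : G.Walk v v), c.IsCycle ∧ c.length = L.length ∧
      ∀ x ∈ c.support, x ∈ L := by
  match L, hne with
  | a :: M, _ =>
    match M with
    | [] => simp at h3
    | b :: M' =>
      have hM' : M' = [] ∨ ∃ l' g, M' = l' ++ [g] := by
        rcases List.eq_nil_or_concat M' with rfl | ⟨l', g, hg⟩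
        · exact Or.inl rfl
        · exact Or.inr ⟨l', g, by simpa using hg⟩
      rcases hM' with rfl | ⟨l', g, rfl⟩
      · simp at h3
      · have hch : List.Chain G.Adj a (b :: (l' ++ [g])) := hchain
        have hga : G.Adj g a := by
          have h1 : (a :: b :: (l' ++ [g])).getLast? = some g := by
            rw [← List.cons_append, ← List.cons_append, List.getLast?_concat]
          rw [List.getLast?_eq_getLast (by simp), Option.some_inj] at h1
          rw [← h1]
          exact hclose
        obtain ⟨c, hc, hlen, hsupp⟩ := exists_cycle_of_list G a b g l' hnd hch hga
        refine ⟨a, c, hc, by simp [hlen], ?_⟩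
        intro x hx
        rw [hsupp] at hx
        simp only [List.mem_cons, List.mem_append, List.mem_singleton] at hx ⊢
        tauto

lemma chain'_of_clique {S : Set V} (hS : S.Pairwise G.Adj) (l : List V)
    (hnd : l.Nodup) (hmem : ∀ x ∈ l, x ∈ S) : l.Chain' G.Adj := by
  refine List.Pairwise.isChain ?_
  exact hnd.imp_of_mem (fun ha hb hne => hS (hmem _ ha) (hmem _ hb) hne)

lemma exists_list_of_ncard [Finite V] {S : Set V} {m : ℕ} (h : m ≤ S.ncard) :
    ∃ l : List V, l.Nodup ∧ l.length = m ∧ ∀ x ∈ l, x ∈ S := by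
  obtain ⟨t, hts, htm⟩ := Set.exists_subset_card_eq h
  have htfin : t.Finite := Set.toFinite t
  refine ⟨htfin.toFinset.toList, Finset.nodup_toList _, ?_, ?_⟩
  · rw [Finset.length_toList, ← Set.ncard_eq_toFinset_card t htfin, htm]
  · intro x hx
    rw [Finset.mem_toList, Set.Finite.mem_toFinset] at hx
    exact hts hx

def interleave : List V → List V → List V
  | [], _ => []
  | _ :: _, [] => []
  | x :: xs, y :: ys => x :: y :: interleave xs ys

lemma interleave_perm (xs ys : List V) (h : xs.length = ys.length) :
    (interleave xs ys).Perm (xs ++ ys) := by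
  induction xs generalizing ys with
  | nil => cases ys with
    | nil => simp [interleave]
    | cons y ys => simp at h
  | cons x xs ih => cases ys with
    | nil => simp at h
    | cons y ys =>
      simp only [interleave]
      refine List.Perm.cons x ?_
      have := (ih ys (by simpa using h)).cons y
      refine this.trans ?_
      exact (List.perm_middle).symm

lemma interleave_head?_mem {xs ys : List V} {z : V}
    (h : z ∈ (interleave xs ys).head?) : z ∈ xs := by
  match xs, ys with
  | [], _ => simp [interleave] at h
  | _ :: _, [] => simp [interleave] at h
  | x :: xs, y :: ys =>
    simp only [interleave, List.head?_cons, Option.mem_def, Option.some.injEq] at h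
    simp [← h]

lemma interleave_chain' (xs ys : List V) (h : xs.length = ys.length)
    (hadj : ∀ x ∈ xs, ∀ y ∈ ys, G.Adj x y) :
    (interleave xs ys).Chain' G.Adj := by
  induction xs generalizing ys with
  | nil => simp [interleave]; exact List.isChain_nil
  | cons x xs ih => cases ys with
    | nil => simp at h
    | cons y ys =>
      simp only [interleave]
      refine List.isChain_cons_cons.mpr ?_
      refine ⟨hadj x (by simp) y (by simp), ?_⟩
      rw [List.isChain_cons]
      refine ⟨?_, ih ys (by simpa using h) (fun a ha b hb => hadj a (by simp [ha]) b (by simp [hb]))⟩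
      intro z hz
      have hzmem : z ∈ xs := interleave_head?_mem hz
      exact (hadj z (by simp [hzmem]) y (by simp)).symm

lemma interleave_getLast (xs ys : List V) (h : xs.length = ys.length) (hne : ys ≠ [])
    (hne2 : interleave xs ys ≠ []) :
    (interleave xs ys).getLast hne2 = ys.getLast hne := by
  induction xs generalizing ys with
  | nil => cases ys with
    | nil => simp at hne
    | cons y ys => simp at h
  | cons x xs ih => cases ys with
    | nil => simp at h
    | cons y ys =>
      cases xs with
      | nil =>
        cases ys with
        | nil => simp [interleave]
        | cons _ _ => simp at h
      | cons x' xs' => cases ys with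
        | nil => simp at h
        | cons y' ys' =>
          have h' : (x' :: xs').length = (y' :: ys').length := by simpa using h
          have hne' : interleave (x' :: xs') (y' :: ys') ≠ [] := by simp [interleave]
          have := ih (y' :: ys') h' (by simp) hne'
          simp only [interleave] at *
          rw [List.getLast_cons, List.getLast_cons]
          · exact this
          · simp

lemma head_ne_getLast {l : List V} (hnd : l.Nodup) (h2 : 2 ≤ l.length) (hne : l ≠ []) :
    l.head hne ≠ l.getLast hne := by
  rcases l with _ | ⟨a, _ | ⟨b, t⟩⟩
  · simp at hne
  · simp at h2
  · simp only [List.head_cons]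
    intro h
    have hmem : (a :: b :: t).getLast (by simp) ∈ b :: t := by
      rw [List.getLast_cons (by simp)]
      exact List.getLast_mem _
    rw [← h] at hmem
    exact (List.nodup_cons.mp hnd).1 hmem

lemma clique_hasNCycle [Finite V] {S : Set V} (hS : S.Pairwise G.Adj) {m : ℕ}
    (h3 : 3 ≤ m) (hm : m ≤ S.ncard) : HasNCycle G m := by
  obtain ⟨l, hnd, hlen, hmem⟩ := exists_list_of_ncard hm
  have hne : l ≠ [] := by
    intro h; rw [h] at hlen; simp at hlen; omega
  have hchain := chain'_of_clique hS l hnd hmem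
  have hhl : l.head hne ≠ l.getLast hne := head_ne_getLast hnd (by omega) hne
  have hclose : G.Adj (l.getLast hne) (l.head hne) :=
    hS (hmem _ (List.getLast_mem hne)) (hmem _ (List.head_mem hne)) (Ne.symm hhl)
  obtain ⟨v, c, hc, hlen', _⟩ := exists_cycle_of_list'' G l (by omega) hnd hchain hne hclose
  exact ⟨v, c, hc, by omega⟩

lemma cross_hasNCycle [Finite V] {SA SB : Set V} (hdisj : Disjoint SA SB)
    (hA : SA.Pairwise G.Adj) (hB : SB.Pairwise G.Adj)
    {a a₂ b b₂ : V} (ha : a ∈ SA) (ha₂ : a₂ ∈ SA) (hb : b ∈ SB) (hb₂ : b₂ ∈ SB)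
    (hnea : a ≠ a₂) (hneb : b ≠ b₂) (e1 : G.Adj a b) (e2 : G.Adj a₂ b₂)
    {p q : ℕ} (hp : p + 2 ≤ SA.ncard) (hq : q + 2 ≤ SB.ncard) :
    HasNCycle G (p + q + 4) := by
  have hxsub : ({a, a₂} : Set V) ⊆ SA := by simp [Set.insert_subset_iff, ha, ha₂]
  have hysub : ({b, b₂} : Set V) ⊆ SB := by simp [Set.insert_subset_iff, hb, hb₂]
  obtain ⟨xs, hxnd, hxlen, hxmem⟩ := exists_list_of_ncard (S := SA \ {a, a₂}) (m := p) (by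
    rw [Set.ncard_diff hxsub (Set.toFinite _), Set.ncard_pair hnea]; omega)
  obtain ⟨ys, hynd, hylen, hymem⟩ := exists_list_of_ncard (S := SB \ {b, b₂}) (m := q) (by
    rw [Set.ncard_diff hysub (Set.toFinite _), Set.ncard_pair hneb]; omega)
  set L1 : List V := a :: (xs ++ [a₂]) with hL1
  set L2 : List V := b₂ :: (ys ++ [b]) with hL2
  set L : List V := L1 ++ L2 with hL
  have hL1mem : ∀ x ∈ L1, x ∈ SA := by
    intro x hx
    simp only [hL1, List.mem_cons, List.mem_append, List.mem_singleton] at hx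
    rcases hx with rfl | hx | rfl | hx
    · exact ha
    · exact (hxmem x hx).1
    · exact ha₂
    · exact absurd hx List.not_mem_nil
  have hL2mem : ∀ x ∈ L2, x ∈ SB := by
    intro x hx
    simp only [hL2, List.mem_cons, List.mem_append, List.mem_singleton] at hx
    rcases hx with rfl | hx | rfl | hx
    · exact hb₂
    · exact (hymem x hx).1
    · exact hb
    · exact absurd hx List.not_mem_nil
  have hL1nd : L1.Nodup := by
    rw [hL1, List.nodup_cons, List.nodup_append]
    refine ⟨?_, hxnd, List.nodup_singleton _, ?_⟩
    · intro hmem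
      rcases List.mem_append.mp hmem with hx | hx
      · exact (hxmem a hx).2 (by simp)
      · exact hnea (by simpa using hx)
    · intro x hx y hx' hxy
      have : x = a₂ := by simpa [hxy] using hx'
      exact (hxmem x hx).2 (by simp [this])
  have hL2nd : L2.Nodup := by
    rw [hL2, List.nodup_cons, List.nodup_append]
    refine ⟨?_, hynd, List.nodup_singleton _, ?_⟩
    · intro hmem
      rcases List.mem_append.mp hmem with hy | hy
      · exact (hymem b₂ hy).2 (by simp)
      · exact hneb ((by simpa using hy : b₂ = b).symm)
    · intro x hx y hx' hxy
      have : x = b := by simpa [hxy] using hx'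
      exact (hymem x hx).2 (by simp [this])
  have hdisjL : L1.Disjoint L2 := fun {x} hx hx' =>
    Set.disjoint_left.mp hdisj (hL1mem x hx) (hL2mem x hx')
  have hnd : L.Nodup := by
    rw [hL, List.nodup_append]
    exact ⟨hL1nd, hL2nd, fun x hx y hy hxy => hdisjL hx (hxy ▸ hy)⟩
  have hch1 : L1.Chain' G.Adj := chain'_of_clique hA _ hL1nd hL1mem
  have hch2 : L2.Chain' G.Adj := chain'_of_clique hB _ hL2nd hL2mem
  have hchain : L.Chain' G.Adj := by
    rw [hL]
    refine List.IsChain.append hch1 hch2 ?_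
    intro x hx y hy
    have hg : L1.getLast? = some a₂ := by
      rw [hL1, ← List.cons_append, List.getLast?_concat]
    rw [hg] at hx
    have hy' : b₂ = y := by simpa [hL2] using hy
    have hx' : a₂ = x := by simpa using hx
    subst hx'; subst hy'
    exact e2
  have hneL : L ≠ [] := by simp [hL, hL1]
  have hhead : L.head hneL = a := rfl
  have hlast : L.getLast hneL = b := by
    have h1 : L.getLast? = some b := by
      rw [show L = (L1 ++ (b₂ :: ys)) ++ [b] from by simp [hL, hL2], List.getLast?_concat]
    rw [List.getLast?_eq_getLast hneL, Option.some_inj] at h1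
    exact h1
  have hclose : G.Adj (L.getLast hneL) (L.head hneL) := by
    rw [hhead, hlast]; exact e1.symm
  have hlenL : L.length = p + q + 4 := by
    simp [hL, hL1, hL2, hxlen, hylen]; omega
  obtain ⟨v, c, hc, hclen, _⟩ := exists_cycle_of_list'' G L (by omega) hnd hchain hneL hclose
  exact ⟨v, c, hc, by omega⟩

lemma bip_cycle [Finite V] {SA SB : Set V} (hdisj : Disjoint SA SB)
    (hadj : ∀ x ∈ SA, ∀ y ∈ SB, G.Adj x y) {j : ℕ} (hj : 2 ≤ j)
    (hA : j ≤ SA.ncard) (hB : j ≤ SB.ncard) :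
    ∃ (v : V) (c : G.Walk v v), c.IsCycle ∧ c.length = 2 * j ∧
      ∀ x ∈ c.support, x ∈ SA ∪ SB := by
  obtain ⟨xs, hxnd, hxlen, hxmem⟩ := exists_list_of_ncard hA
  obtain ⟨ys, hynd, hylen, hymem⟩ := exists_list_of_ncard hB
  have hlen : xs.length = ys.length := by rw [hxlen, hylen]
  set L := interleave xs ys with hLdef
  have hperm := interleave_perm xs ys hlen
  have hLlen : L.length = 2 * j := by
    rw [hLdef, hperm.length_eq, List.length_append, hxlen, hylen]; omega
  have hLne : L ≠ [] := by
    intro h; rw [h] at hLlen; simp at hLlen; omega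
  have hnd : L.Nodup := by
    rw [hperm.nodup_iff, List.nodup_append]
    exact ⟨hxnd, hynd, fun x hx y hy hxy =>
      Set.disjoint_left.mp hdisj (hxmem x hx) (hymem x (hxy ▸ hy))⟩
  have hchain : L.Chain' G.Adj :=
    interleave_chain' xs ys hlen (fun x hx y hy => hadj x (hxmem x hx) y (hymem y hy))
  have hysne : ys ≠ [] := by
    intro h; rw [h] at hylen; simp at hylen; omega
  have hheadmem : L.head hLne ∈ xs := by
    refine interleave_head?_mem (ys := ys) (z := L.head hLne) ?_
    rw [← hLdef, List.head?_eq_head hLne]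
    rfl
  have hlastmem : L.getLast hLne ∈ ys := by
    have hlast : L.getLast hLne = ys.getLast hysne :=
      interleave_getLast xs ys hlen hysne hLne
    rw [hlast]
    exact List.getLast_mem hysne
  have hclose : G.Adj (L.getLast hLne) (L.head hLne) :=
    (hadj _ (hxmem _ hheadmem) _ (hymem _ hlastmem)).symm
  obtain ⟨v, c, hc, hclen, hsupp⟩ :=
    exists_cycle_of_list'' G L (by omega) hnd hchain hLne hclose
  refine ⟨v, c, hc, by omega, fun x hx => ?_⟩
  have := hsupp x hx
  rw [hperm.mem_iff, List.mem_append] at this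
  rcases this with h | h
  · exact Or.inl (hxmem x h)
  · exact Or.inr (hymem x h)

theorem stmt15 (k j N : ℕ) (hk : 2 < k) (hkj : k < j)
    (R : SimpleGraph (Fin N))
    (hred : ¬ HasNCycle R (2 * k + 1))
    (hblue : ¬ HasNWheel Rᶜ (2 * j))
    (w : Fin N) (H : Set (Fin N)) (hH : H = Rᶜ.neighborSet w)
    (hcard : 3 * j ≤ H.ncard) :
    ¬ IsBipartite (Rᶜ.induce H) := by
  rintro ⟨A, hA⟩
  have hjk : k + 1 ≤ j := hkj
  set A' : Set (Fin N) := {v | ∃ h : v ∈ H, (⟨v, h⟩ : ↥H) ∈ A} with hA'def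
  set B' : Set (Fin N) := H \ A' with hB'def
  have hA'H : A' ⊆ H := fun v hv => hv.choose
  have hB'H : B' ⊆ H := fun v hv => hv.1
  have hmemA : ∀ u (hu : u ∈ H), u ∈ A' ↔ (⟨u, hu⟩ : ↥H) ∈ A := by
    intro u hu
    constructor
    · rintro ⟨h, hm⟩; exact hm
    · intro hm; exact ⟨hu, hm⟩
  have key : ∀ u, ∀ hu : u ∈ H, ∀ v, ∀ hv : v ∈ H, u ≠ v → ¬ R.Adj u v →
      (u ∈ A' ↔ v ∉ A') := by
    intro u hu v hv hne hnadj
    have hadj : (Rᶜ.induce H).Adj ⟨u, hu⟩ ⟨v, hv⟩ := by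
      show Rᶜ.Adj u v
      exact (SimpleGraph.compl_adj R u v).mpr ⟨hne, hnadj⟩
    have h1 := hA _ _ hadj
    rw [hmemA u hu, hmemA v hv]
    exact h1
  have hcliqueA : A'.Pairwise R.Adj := by
    intro u hu v hv hne
    by_contra hnadj
    exact ((key u (hA'H hu) v (hA'H hv) hne hnadj).mp hu) hv
  have hcliqueB : B'.Pairwise R.Adj := by
    intro u hu v hv hne
    by_contra hnadj
    exact hu.2 ((key u (hB'H hu) v (hB'H hv) hne hnadj).mpr hv.2)
  have hA'le : A'.ncard ≤ 2 * k := by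
    by_contra hgt
    exact hred (clique_hasNCycle hcliqueA (by omega) (by omega))
  have hB'le : B'.ncard ≤ 2 * k := by
    by_contra hgt
    exact hred (clique_hasNCycle hcliqueB (by omega) (by omega))
  have hsum : B'.ncard + A'.ncard = H.ncard := by
    rw [hB'def, Set.ncard_diff hA'H (Set.toFinite _)]
    have := Set.ncard_le_ncard hA'H (Set.toFinite H)
    omega
  have hA'ge : j + 2 ≤ A'.ncard := by omega
  have hB'ge : j + 2 ≤ B'.ncard := by omega
  have hdisj : Disjoint A' B' := Set.disjoint_sdiff_right
  have hstar : ∀ a ∈ A', ∀ b ∈ B', ∀ a₂ ∈ A', ∀ b₂ ∈ B',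
      R.Adj a b → R.Adj a₂ b₂ → a = a₂ ∨ b = b₂ := by
    intro a ha b hb a₂ ha₂ b₂ hb₂ e1 e2
    by_contra hc
    push_neg at hc
    refine hred ?_
    have h6 := cross_hasNCycle (G := R) hdisj hcliqueA hcliqueB ha ha₂ hb hb₂ hc.1 hc.2 e1 e2
      (p := k - 2) (q := k - 1) (by omega) (by omega)
    have h7 : k - 2 + (k - 1) + 4 = 2 * k + 1 := by omega
    rwa [h7] at h6
  have hcases : (∃ va, ∀ a ∈ A', ∀ b ∈ B', R.Adj a b → a = va) ∨
      (∃ vb, ∀ a ∈ A', ∀ b ∈ B', R.Adj a b → b = vb) := by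
    by_cases hex : ∃ a ∈ A', ∃ b ∈ B', R.Adj a b
    · obtain ⟨a₀, ha₀, b₀, hb₀, e0⟩ := hex
      by_cases hall : ∀ a ∈ A', ∀ b ∈ B', R.Adj a b → a = a₀
      · exact Or.inl ⟨a₀, hall⟩
      · push_neg at hall
        obtain ⟨a₁, ha₁, b₁, hb₁, e1, hne₁⟩ := hall
        have hb₁0 : b₁ = b₀ :=
          (hstar a₁ ha₁ b₁ hb₁ a₀ ha₀ b₀ hb₀ e1 e0).resolve_left hne₁
        refine Or.inr ⟨b₀, ?_⟩
        intro a ha b hb e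
        by_contra hbne
        have h1 : a = a₀ := (hstar a ha b hb a₀ ha₀ b₀ hb₀ e e0).resolve_right hbne
        rcases hstar a ha b hb a₁ ha₁ b₁ hb₁ e e1 with h2 | h2
        · exact hne₁ (by rw [← h2, h1])
        · exact hbne (h2.trans hb₁0)
    · push_neg at hex
      exact Or.inl ⟨w, fun a ha b hb e => absurd e (hex a ha b hb)⟩
  obtain ⟨A'', B'', hA''sub, hB''sub, hA''card, hB''card, hblue'⟩ :
      ∃ A'' B'', A'' ⊆ A' ∧ B'' ⊆ B' ∧ j ≤ A''.ncard ∧ j ≤ B''.ncard ∧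
        ∀ a ∈ A'', ∀ b ∈ B'', ¬ R.Adj a b := by
    rcases hcases with ⟨va, hva⟩ | ⟨vb, hvb⟩
    · refine ⟨A' \ {va}, B', Set.diff_subset, subset_rfl, ?_, by omega, ?_⟩
      · have hsub : A' ⊆ insert va (A' \ {va}) := by
          intro x hx
          by_cases hxva : x = va
          · simp [hxva]
          · simp [hx, hxva]
        have h2 := Set.ncard_le_ncard hsub (Set.toFinite _)
        have h3 := Set.ncard_insert_le va (A' \ {va})
        omega
      · intro a ha b hb e
        exact ha.2 (by simp [hva a ha.1 b hb e])
    · refine ⟨A', B' \ {vb}, subset_rfl, Set.diff_subset, by omega, ?_, ?_⟩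
      · have hsub : B' ⊆ insert vb (B' \ {vb}) := by
          intro x hx
          by_cases hxvb : x = vb
          · simp [hxvb]
          · simp [hx, hxvb]
        have h2 := Set.ncard_le_ncard hsub (Set.toFinite _)
        have h3 := Set.ncard_insert_le vb (B' \ {vb})
        omega
      · intro a ha b hb e
        exact hb.2 (by simp [hvb a ha b hb.1 e])
  refine hblue ?_
  have hdisj2 : Disjoint A'' B'' := hdisj.mono hA''sub hB''sub
  have hcrossblue : ∀ x ∈ A'', ∀ y ∈ B'', Rᶜ.Adj x y := by
    intro x hx y hy
    refine (SimpleGraph.compl_adj R x y).mpr ⟨?_, hblue' x hx y hy⟩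
    exact fun h => (Set.disjoint_left.mp hdisj2 hx) (h ▸ hy)
  obtain ⟨v, c, hc, hclen, hsupp⟩ :=
    bip_cycle (G := Rᶜ) hdisj2 hcrossblue (by omega) hA''card hB''card
  refine ⟨w, v, c, hc, hclen, ?_⟩
  intro x hx
  have hxH : x ∈ H := by
    rcases hsupp x hx with h | h
    · exact hA'H (hA''sub h)
    · exact hB'H (hB''sub h)
  rw [hH] at hxH
  exact hxH
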